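/- Let n ∈ ℝ² be a unit vector, let v ∈ ℝ² be nonzero with v · n = 0, let a ∈ ℝ² satisfy a · n = 0, and let g ∈ ℝ² satisfy (D(v) g) · n = 0. Then [(E(v) ⊗ a) g] · n = 0, i.e., Σ_{i=1}^{2} n_i Σ_{j=1}^{2} (Σ_{k=1}^{2} ∂_{v_k} D_{ij}(v) a_k) g_j = 0. -/

import Mathlib

open scoped BigOperators

/-- Euclidean norm of a vector in ℝ². -/
noncomputable def norm2 (v : Fin 2 → ℝ) : ℝ := Real.sqrt (∑ i, v i ^ 2)

/-- The 2D Bear–Scheidegger diffusion–dispersion tensor. -/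
noncomputable def bsD (φ dm dt dl : ℝ) (v : Fin 2 → ℝ) (i j : Fin 2) : ℝ :=
  (φ * dm + dt * norm2 v) * (if i = j then (1 : ℝ) else 0) + (dl - dt) * v i * v j / norm2 v

/-- The partial derivative `∂_{v_k} D_{ij}(v)`. -/
noncomputable def pD (φ dm dt dl : ℝ) (v : Fin 2 → ℝ) (i j k : Fin 2) : ℝ :=
  fderiv ℝ (fun u => bsD φ dm dt dl u i j) v (Pi.single k 1)

set_option maxHeartbeats 1000000

lemma norm2_pos {v : Fin 2 → ℝ} (hv : v ≠ 0) : 0 < norm2 v := by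
  have : 0 < ∑ i, v i ^ 2 := by
    rcases Function.ne_iff.mp hv with ⟨i, hi⟩
    have h1 : 0 < v i ^ 2 := pow_two_pos_of_ne_zero (by simpa using hi)
    have h2 : ∀ j ∈ Finset.univ, (0:ℝ) ≤ v j ^ 2 := fun j _ => sq_nonneg _
    calc 0 < v i ^ 2 := h1
    _ ≤ ∑ j, v j ^ 2 := Finset.single_le_sum h2 (Finset.mem_univ i)
  exact Real.sqrt_pos.mpr this

lemma norm2_sq {v : Fin 2 → ℝ} : norm2 v ^ 2 = ∑ i, v i ^ 2 := by
  have : 0 ≤ ∑ i, v i ^ 2 := Finset.sum_nonneg fun j _ => sq_nonneg _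
  simpa [norm2] using Real.sq_sqrt this

lemma pD_eq (φ dm dt dl : ℝ) {v : Fin 2 → ℝ} (hv : v ≠ 0) (i j k : Fin 2) :
    pD φ dm dt dl v i j k =
      dt * (v k / norm2 v) * (if i = j then (1:ℝ) else 0) +
      (dl - dt) * (((if i = k then (1:ℝ) else 0) * v j + (if j = k then (1:ℝ) else 0) * v i) / norm2 v
        - v i * v j * v k / norm2 v ^ 3) := by
  have hN : 0 < norm2 v := norm2_pos hv
  have hQ0 : (0:ℝ) < ∑ m, v m ^ 2 := by
    have := norm2_sq (v := v); nlinarith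
  set pr : Fin 2 → (Fin 2 → ℝ) →L[ℝ] ℝ := fun m => ContinuousLinearMap.proj m with hpr
  have hsq : ∀ m : Fin 2, HasFDerivAt (fun u : Fin 2 → ℝ => u m ^ 2) ((2 * v m) • pr m) v := by
    intro m
    have h := ((pr m).hasFDerivAt (x := v)).mul ((pr m).hasFDerivAt (x := v))
    simp only [ContinuousLinearMap.proj_apply, hpr] at h ⊢
    have heq : (2 * v m) • (ContinuousLinearMap.proj (R := ℝ) (φ := fun _ : Fin 2 => ℝ) m)
        = v m • ContinuousLinearMap.proj m + v m • ContinuousLinearMap.proj m := by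
      rw [two_mul, add_smul]
    rw [heq]
    simpa [pow_two, Pi.mul_def] using h
  have hQ : HasFDerivAt (fun u : Fin 2 → ℝ => ∑ m, u m ^ 2) (∑ m, (2 * v m) • pr m) v :=
    HasFDerivAt.fun_sum (fun m _ => hsq m)
  have hNd : HasFDerivAt norm2 ((1 / (2 * norm2 v)) • ∑ m, (2 * v m) • pr m) v :=
    (Real.hasDerivAt_sqrt hQ0.ne').comp_hasFDerivAt v hQ
  set C := ((1 / (2 * norm2 v)) • ∑ m, (2 * v m) • pr m) with hC
  have hInv : HasFDerivAt (fun u => (norm2 u)⁻¹) ((-((norm2 v) ^ 2)⁻¹) • C) v :=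
    (hasDerivAt_inv hN.ne').comp_hasFDerivAt v hNd
  have ha : HasFDerivAt (fun u : Fin 2 → ℝ => (dl - dt) * u i * u j)
      (((dl - dt) * v i) • pr j + v j • ((dl - dt) • pr i)) v :=
    (((pr i).hasFDerivAt (x := v)).const_mul (dl - dt)).mul ((pr j).hasFDerivAt (x := v))
  have h2 : HasFDerivAt (fun u : Fin 2 → ℝ => (dl - dt) * u i * u j * (norm2 u)⁻¹)
      ((((dl - dt) * v i * v j) • ((-((norm2 v) ^ 2)⁻¹) • C)) +
        ((norm2 v)⁻¹ • (((dl - dt) * v i) • pr j + v j • ((dl - dt) • pr i)))) v :=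
    ha.mul hInv
  have h1 : HasFDerivAt (fun u => (φ * dm + dt * norm2 u) * (if i = j then (1:ℝ) else 0))
      ((if i = j then (1:ℝ) else 0) • (dt • C)) v :=
    ((hNd.const_mul dt).const_add (φ * dm)).mul_const _
  have hD : HasFDerivAt (fun u => bsD φ dm dt dl u i j)
      (((if i = j then (1:ℝ) else 0) • (dt • C)) +
       ((((dl - dt) * v i * v j) • ((-((norm2 v) ^ 2)⁻¹) • C)) +
        ((norm2 v)⁻¹ • (((dl - dt) * v i) • pr j + v j • ((dl - dt) • pr i))))) v := by
    have := h1.add h2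
    simpa only [bsD, div_eq_mul_inv, Pi.add_def] using this
  have hCk : C (Pi.single k 1) = v k / norm2 v := by
    simp only [hC, ContinuousLinearMap.smul_apply, ContinuousLinearMap.sum_apply,
      ContinuousLinearMap.proj_apply, hpr, Pi.single_apply, smul_eq_mul]
    rw [Fin.sum_univ_two]
    fin_cases k <;> · simp; field_simp
  rw [pD, hD.fderiv]
  simp only [ContinuousLinearMap.add_apply, ContinuousLinearMap.smul_apply, hCk,
    ContinuousLinearMap.proj_apply, hpr, Pi.single_apply, smul_eq_mul]
  split_ifs <;> field_simp <;> ring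


theorem stmt4 (φ dm dt dl : ℝ) (hφ : 0 < φ) (hdm : 0 < dm) (hdt : 0 < dt) (hdl : 0 < dl)
    (n v a g : Fin 2 → ℝ) (hn : ∑ i, n i ^ 2 = 1) (hv : v ≠ 0)
    (hvn : ∑ i, v i * n i = 0) (han : ∑ i, a i * n i = 0)
    (hg : ∑ i, (∑ j, bsD φ dm dt dl v i j * g j) * n i = 0) :
    ∑ i, n i * ∑ j, (∑ k, pD φ dm dt dl v i j k * a k) * g j = 0 := by
  have hN : 0 < norm2 v := norm2_pos hv
  have hvn' : v 0 * n 0 + v 1 * n 1 = 0 := by simpa [Fin.sum_univ_two] using hvn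
  have han' : a 0 * n 0 + a 1 * n 1 = 0 := by simpa [Fin.sum_univ_two] using han
  have hg' := hg
  simp only [bsD, Fin.sum_univ_two] at hg'
  norm_num at hg'
  have key : (φ * dm + dt * norm2 v) * (g 0 * n 0 + g 1 * n 1) = 0 := by
    linear_combination hg' - ((dl - dt) * (v 0 * g 0 + v 1 * g 1) / norm2 v) * hvn'
  have hpos : (0:ℝ) < φ * dm + dt * norm2 v := by positivity
  have hgn : g 0 * n 0 + g 1 * n 1 = 0 :=
    (mul_eq_zero.mp key).resolve_left hpos.ne'
  simp only [pD_eq φ dm dt dl hv, Fin.sum_univ_two]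
  norm_num
  linear_combination
    (dt * (v 0 * a 0 + v 1 * a 1) / norm2 v) * hgn
    + ((dl - dt) * (v 0 * g 0 + v 1 * g 1) / norm2 v) * han'
    + ((dl - dt) * ((a 0 * g 0 + a 1 * g 1) / norm2 v
        - (v 0 * g 0 + v 1 * g 1) * (v 0 * a 0 + v 1 * a 1) / norm2 v ^ 3)) * hvn'
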